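/- (Confluent Christoffel–Darboux formula.) Let T be a (p,q)-banded matrix with nonvanishing extreme diagonals, with determinantal polynomials Q_{n,N} and R_{n,N}. Then for every N ∈ ℕ and every x ∈ ℝ: α_N · β_N · ∑_{n=0}^{N} Q_{n,N}(x) · R_{n,N}(x) = P'_{N+1}(x)·P_N(x) − P'_N(x)·P_{N+1}(x), where P' denotes the derivative of the polynomial P. -/

import Mathlib

open Polynomial Finset Matrix

lemma evalCharpoly {n : ℕ} (M : Matrix (Fin n) (Fin n) ℝ) (x : ℝ) :
    M.charpoly.eval x = (x • (1 : Matrix (Fin n) (Fin n) ℝ) - M).det := by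
  rw [Matrix.charpoly, ← Polynomial.coe_evalRingHom, RingHom.map_det]
  congr 1
  ext i j
  by_cases h : i = j <;>
    simp [h, Matrix.charmatrix_apply, Matrix.map_apply, Matrix.diagonal_apply, Matrix.one_apply,
      Matrix.smul_apply]

lemma adjLast {n : ℕ} (M : Matrix (Fin (n+1)) (Fin (n+1)) ℝ) :
    M.adjugate (Fin.last n) (Fin.last n)
      = (M.submatrix Fin.castSucc Fin.castSucc).det := by
  rw [Matrix.adjugate_apply, Matrix.det_succ_row _ (Fin.last n)]
  rw [Finset.sum_eq_single (Fin.last n)]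
  · simp [Fin.succAbove_last, Matrix.submatrix_apply]
    congr 1
    ext i j
    simp [Matrix.submatrix_apply, Matrix.updateRow_apply, (Fin.castSucc_lt_last i).ne]
  · intro b _ hb
    simp [Matrix.updateRow_apply, Pi.single_apply, hb.symm]
  · simp

section QDet
variable (p' : ℕ) (F : ℕ → ℕ → ℝ) (N : ℕ)

/-- The `Q`-type determinant with first row at index `n`. -/
noncomputable def qdet (n : ℕ) : ℝ :=
  Matrix.det (Matrix.of fun i a : Fin (p'+1) =>
    if (i : ℕ) = 0 then F ((a : ℕ) + 1) n else F ((a : ℕ) + 1) (N + (i : ℕ)))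

lemma qdet_cofactor (n : ℕ) :
    qdet p' F N n = ∑ j : Fin (p'+1), ((-1) ^ (j : ℕ) *
      Matrix.det (Matrix.of fun i a : Fin p' =>
        F (((j.succAbove a) : ℕ) + 1) (N + ((i : ℕ) + 1)))) * F ((j : ℕ) + 1) n := by
  rw [qdet, Matrix.det_succ_row_zero]
  refine Finset.sum_congr rfl fun j _ => ?_
  have h1 : (Matrix.of fun i a : Fin (p'+1) =>
      if (i : ℕ) = 0 then F ((a : ℕ) + 1) n else F ((a : ℕ) + 1) (N + (i : ℕ))).submatrix
        Fin.succ j.succAbove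
      = Matrix.of fun i a : Fin p' => F (((j.succAbove a) : ℕ) + 1) (N + ((i : ℕ) + 1)) := by
    ext i a
    simp [Matrix.submatrix_apply, Fin.val_succ]
  rw [h1]
  simp
  ring

lemma qdet_vanish (i : ℕ) (h1 : 1 ≤ i) (h2 : i ≤ p') : qdet p' F N (N + i) = 0 := by
  apply Matrix.det_zero_of_row_eq (i := (0 : Fin (p'+1))) (j := ⟨i, by omega⟩)
  · intro h
    have := congrArg Fin.val h
    simp at this
    omega
  · ext a
    simp only [Matrix.of_apply, Fin.val_zero, if_true]
    rw [if_neg (by simpa using by omega : ¬ ((⟨i, by omega⟩ : Fin (p'+1)) : ℕ) = 0)]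

lemma qdet_rotate :
    qdet p' F N (N + (p'+1)) = (-1) ^ p' *
      Matrix.det (Matrix.of fun i a : Fin (p'+1) => F ((a : ℕ) + 1) (N + 1 + (i : ℕ))) := by
  have key : (Matrix.of fun i a : Fin (p'+1) =>
        if (i : ℕ) = 0 then F ((a : ℕ) + 1) (N + (p'+1)) else F ((a : ℕ) + 1) (N + (i : ℕ))).submatrix
        (finRotate (p'+1)) id
      = Matrix.of fun i a : Fin (p'+1) => F ((a : ℕ) + 1) (N + 1 + (i : ℕ)) := by
    ext i a
    have hval : ((finRotate (p'+1) i : Fin (p'+1)) : ℕ) = if i = Fin.last p' then 0 else (i : ℕ) + 1 := by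
      rw [finRotate_succ_apply, Fin.val_add_one]
    by_cases hi : i = Fin.last p'
    · subst hi
      simp only [Matrix.submatrix_apply, id, Matrix.of_apply, hval, if_pos rfl, if_true]
      norm_num
      congr 1
      omega
    · simp only [Matrix.submatrix_apply, id, Matrix.of_apply, hval, if_neg hi]
      rw [if_neg (by omega)]
      congr 1
      omega
  have hperm := Matrix.det_permute (finRotate (p'+1))
    (Matrix.of fun i a : Fin (p'+1) =>
      if (i : ℕ) = 0 then F ((a : ℕ) + 1) (N + (p'+1)) else F ((a : ℕ) + 1) (N + (i : ℕ)))
  rw [key, sign_finRotate] at hperm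
  have hcast : (((((-1 : ℤˣ)) ^ p' : ℤˣ) : ℤ) : ℝ) = (-1 : ℝ) ^ p' := by push_cast; ring
  rw [qdet, show N + (p'+1) = N + (p'+1) from rfl]
  have : ((-1 : ℝ)) ^ p' * ((-1 : ℝ)) ^ p' = 1 := by rw [← mul_pow]; norm_num
  calc (Matrix.of fun i a : Fin (p'+1) =>
        if (i : ℕ) = 0 then F ((a : ℕ) + 1) (N + (p'+1)) else F ((a : ℕ) + 1) (N + (i : ℕ))).det
      = ((-1:ℝ)^p' * (-1:ℝ)^p') * (Matrix.of fun i a : Fin (p'+1) =>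
        if (i : ℕ) = 0 then F ((a : ℕ) + 1) (N + (p'+1)) else F ((a : ℕ) + 1) (N + (i : ℕ))).det := by
        rw [this, one_mul]
    _ = (-1) ^ p' * Matrix.det (Matrix.of fun i a : Fin (p'+1) => F ((a : ℕ) + 1) (N + 1 + (i : ℕ))) := by
        rw [hperm, Nat.add_sub_cancel, hcast]
        ring

end QDet

section Tele
variable (p q N : ℕ) (T : ℕ → ℕ → ℝ)

lemma tele (hband : ∀ i j, (j + p < i ∨ i + q < j) → T i j = 0)
    (x y : ℝ) (f g : ℕ → ℝ)
    (hf : ∀ n, ∑ m ∈ Finset.Icc (n - q) (n + p), f m * T m n = x * f n)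
    (hg : ∀ n, ∑ m ∈ Finset.Icc (n - p) (n + q), T n m * g m = y * g n) :
    (x - y) * ∑ n ∈ Finset.range (N+1), f n * g n
      = ∑ n ∈ Finset.range (N+1), (∑ m ∈ Finset.Icc (N+1) (N+p), f m * T m n) * g n
        - ∑ n ∈ Finset.range (N+1), f n * (∑ m ∈ Finset.Icc (N+1) (N+q), T n m * g m) := by
  have hf' : ∀ n, n ≤ N → ∑ m ∈ Finset.range (N+p+1), f m * T m n = x * f n := by
    intro n hn
    rw [← hf n]
    symm
    apply Finset.sum_subset
    · intro m hm
      simp only [Finset.mem_Icc] at hm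
      simp only [Finset.mem_range]
      omega
    · intro m hm hm'
      simp only [Finset.mem_range] at hm
      simp only [Finset.mem_Icc, not_and_or, not_le] at hm'
      have : T m n = 0 := by
        apply hband
        omega
      simp [this]
  have hg' : ∀ n, n ≤ N → ∑ m ∈ Finset.range (N+q+1), T n m * g m = y * g n := by
    intro n hn
    rw [← hg n]
    symm
    apply Finset.sum_subset
    · intro m hm
      simp only [Finset.mem_Icc] at hm
      simp only [Finset.mem_range]
      omega
    · intro m hm hm'
      simp only [Finset.mem_range] at hm
      simp only [Finset.mem_Icc, not_and_or, not_le] at hm'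
      have : T n m = 0 := by
        apply hband
        omega
      simp [this]
  have hsplit1 : ∀ n, n ≤ N →
      x * f n = (∑ m ∈ Finset.range (N+1), f m * T m n)
        + ∑ m ∈ Finset.Icc (N+1) (N+p), f m * T m n := by
    intro n hn
    rw [← hf' n hn, show Finset.Icc (N+1) (N+p) = Finset.Ico (N+1) (N+p+1) from
        (Finset.Ico_add_one_right_eq_Icc _ _), Finset.range_eq_Ico,
      ← Finset.sum_Ico_consecutive (fun m => f m * T m n) (by omega : 0 ≤ N+1)
        (by omega : N + 1 ≤ N + p + 1), ← Finset.range_eq_Ico]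
  have hsplit2 : ∀ n, n ≤ N →
      y * g n = (∑ m ∈ Finset.range (N+1), T n m * g m)
        + ∑ m ∈ Finset.Icc (N+1) (N+q), T n m * g m := by
    intro n hn
    rw [← hg' n hn, show Finset.Icc (N+1) (N+q) = Finset.Ico (N+1) (N+q+1) from
        (Finset.Ico_add_one_right_eq_Icc _ _), Finset.range_eq_Ico,
      ← Finset.sum_Ico_consecutive (fun m => T n m * g m) (by omega : 0 ≤ N+1)
        (by omega : N + 1 ≤ N + q + 1), ← Finset.range_eq_Ico]
  have e1 : (x - y) * ∑ n ∈ Finset.range (N+1), f n * g n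
      = ∑ n ∈ Finset.range (N+1), (x * f n) * g n
        - ∑ n ∈ Finset.range (N+1), f n * (y * g n) := by
    rw [Finset.mul_sum, ← Finset.sum_sub_distrib]
    congr 1; ext n; ring
  have e2 : ∑ n ∈ Finset.range (N+1), (x * f n) * g n
      = (∑ n ∈ Finset.range (N+1), (∑ m ∈ Finset.range (N+1), f m * T m n) * g n)
        + ∑ n ∈ Finset.range (N+1), (∑ m ∈ Finset.Icc (N+1) (N+p), f m * T m n) * g n := by
    rw [← Finset.sum_add_distrib]
    refine Finset.sum_congr rfl fun n hn => ?_
    rw [hsplit1 n (by simp at hn; omega)]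
    ring
  have e3 : ∑ n ∈ Finset.range (N+1), f n * (y * g n)
      = (∑ n ∈ Finset.range (N+1), f n * (∑ m ∈ Finset.range (N+1), T n m * g m))
        + ∑ n ∈ Finset.range (N+1), f n * (∑ m ∈ Finset.Icc (N+1) (N+q), T n m * g m) := by
    rw [← Finset.sum_add_distrib]
    refine Finset.sum_congr rfl fun n hn => ?_
    rw [hsplit2 n (by simp at hn; omega)]
    ring
  have hS : ∑ n ∈ Finset.range (N+1), (∑ m ∈ Finset.range (N+1), f m * T m n) * g n
      = ∑ n ∈ Finset.range (N+1), f n * (∑ m ∈ Finset.range (N+1), T n m * g m) := by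
    simp_rw [Finset.sum_mul, Finset.mul_sum]
    rw [Finset.sum_comm]
    exact Finset.sum_congr rfl fun n _ => Finset.sum_congr rfl fun m _ => by ring
  rw [e1, e2, e3]
  linarith [hS]

end Tele

lemma qdet_self (p' : ℕ) (F : ℕ → ℕ → ℝ) (M : ℕ) :
    qdet p' F M M = Matrix.det (Matrix.of fun i a : Fin (p'+1) => F ((a:ℕ)+1) (M + (i:ℕ))) := by
  rw [qdet]
  congr 1
  ext i a
  by_cases h : (i : ℕ) = 0 <;> simp only [Matrix.of_apply, h, if_true, if_false, ↓reduceIte] <;> simp [h]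

lemma l2point (p' q N : ℕ) (T : ℕ → ℕ → ℝ)
    (hband : ∀ i j, (j + (p'+1) < i ∨ i + q < j) → T i j = 0)
    (x : ℝ) (F : ℕ → ℕ → ℝ)
    (hrec : ∀ a, 1 ≤ a → a ≤ p'+1 → ∀ n,
      ∑ m ∈ Finset.Icc (n - q) (n + (p'+1)), F a m * T m n = x * F a n)
    (hdet : (x • (1 : Matrix (Fin (N+1)) (Fin (N+1)) ℝ)
        - Matrix.of (fun i j : Fin (N+1) => T i j)).det ≠ 0) :
    (x • (1 : Matrix (Fin (N+1)) (Fin (N+1)) ℝ)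
        - Matrix.of (fun i j : Fin (N+1) => T i j)).det * qdet p' F N N
      = (-1)^p' * T (N+(p'+1)) N *
        (x • (1 : Matrix (Fin N) (Fin N) ℝ)
          - Matrix.of (fun i j : Fin N => T i j)).det * qdet p' F (N+1) (N+1) := by
  set M : Matrix (Fin (N+1)) (Fin (N+1)) ℝ :=
    x • (1 : Matrix (Fin (N+1)) (Fin (N+1)) ℝ) - Matrix.of (fun i j : Fin (N+1) => T i j) with hM
  have hMunit : IsUnit M.det := isUnit_iff_ne_zero.mpr hdet
  set w : ℕ → ℝ := fun m => ∑ k : Fin (N+1), T m (k : ℕ) * M⁻¹ k (Fin.last N) with hw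
  -- step 1 : the vecMul identity
  have hvm : ∀ a, 1 ≤ a → a ≤ p'+1 →
      Matrix.vecMul (fun n : Fin (N+1) => F a (n : ℕ)) M
        = fun n : Fin (N+1) =>
            ∑ m ∈ Finset.Icc (N+1) (N+(p'+1)), F a m * T m (n : ℕ) := by
    intro a ha1 ha2
    funext n
    have hsum : ∑ m ∈ Finset.range (N+(p'+1)+1), F a m * T m (n : ℕ) = x * F a (n : ℕ) := by
      rw [← hrec a ha1 ha2 (n : ℕ)]
      symm
      apply Finset.sum_subset
      · intro m hm
        simp only [Finset.mem_Icc] at hm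
        simp only [Finset.mem_range]
        have := n.isLt
        omega
      · intro m hm hm'
        simp only [Finset.mem_range] at hm
        simp only [Finset.mem_Icc, not_and_or, not_le] at hm'
        have : T m (n : ℕ) = 0 := by
          apply hband
          omega
        simp [this]
    have hsplit : ∑ m ∈ Finset.range (N+1), F a m * T m (n : ℕ)
        + ∑ m ∈ Finset.Icc (N+1) (N+(p'+1)), F a m * T m (n : ℕ)
        = x * F a (n : ℕ) := by
      rw [← hsum, show Finset.Icc (N+1) (N+(p'+1)) = Finset.Ico (N+1) (N+(p'+1)+1) from
          (Finset.Ico_add_one_right_eq_Icc _ _),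
        Finset.range_eq_Ico,
        Finset.sum_Ico_consecutive (fun m => F a m * T m (n : ℕ)) (by omega : 0 ≤ N+1)
          (by omega : N + 1 ≤ N + (p'+1) + 1), ← Finset.range_eq_Ico]
    have hfin : ∑ m : Fin (N+1), F a (m : ℕ) * T (m : ℕ) (n : ℕ)
        = ∑ m ∈ Finset.range (N+1), F a m * T m (n : ℕ) := by
      rw [← Fin.sum_univ_eq_sum_range]
    show ∑ m : Fin (N+1), F a (m : ℕ) * M m n = _
    have : ∀ m : Fin (N+1), M m n = x * (if m = n then (1:ℝ) else 0) - T (m : ℕ) (n : ℕ) := by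
      intro m
      simp [hM, Matrix.sub_apply, Matrix.smul_apply, Matrix.one_apply, Matrix.of_apply]
    simp only [this]
    have expand : ∑ m : Fin (N+1), F a (m:ℕ) * (x * (if m = n then (1:ℝ) else 0) - T (m:ℕ) (n:ℕ))
        = x * F a (n : ℕ) - ∑ m : Fin (N+1), F a (m:ℕ) * T (m:ℕ) (n:ℕ) := by
      have keyite : ∀ m : Fin (N+1), F a (m:ℕ) * (x * (if m = n then (1:ℝ) else 0))
          = if m = n then x * F a (n : ℕ) else 0 := by
        intro m
        by_cases h : m = n
        · subst h; simp; ring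
        · simp [h]
      simp_rw [mul_sub]
      rw [Finset.sum_sub_distrib]
      congr 1
      rw [Finset.sum_congr rfl (fun m _ => keyite m)]
      simp
    rw [expand, hfin]
    linarith [hsplit]
  -- step 2 : solve for F a N
  have key1 : ∀ a, 1 ≤ a → a ≤ p'+1 →
      F a N = ∑ m ∈ Finset.Icc (N+1) (N+(p'+1)), F a m * w m := by
    intro a ha1 ha2
    have h2 : (fun n : Fin (N+1) => F a (n:ℕ))
        = Matrix.vecMul (fun n : Fin (N+1) =>
            ∑ m ∈ Finset.Icc (N+1) (N+(p'+1)), F a m * T m (n:ℕ)) M⁻¹ := by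
      rw [← hvm a ha1 ha2, Matrix.vecMul_vecMul, Matrix.mul_nonsing_inv _ hMunit,
        Matrix.vecMul_one]
    have h3 := congrFun h2 (Fin.last N)
    simp only [Fin.val_last] at h3
    rw [h3]
    show ∑ k : Fin (N+1),
        (∑ m ∈ Finset.Icc (N+1) (N+(p'+1)), F a m * T m (k:ℕ)) * M⁻¹ k (Fin.last N) = _
    have : ∀ k : Fin (N+1),
        (∑ m ∈ Finset.Icc (N+1) (N+(p'+1)), F a m * T m (k:ℕ)) * M⁻¹ k (Fin.last N)
        = ∑ m ∈ Finset.Icc (N+1) (N+(p'+1)), F a m * (T m (k:ℕ) * M⁻¹ k (Fin.last N)) := by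
      intro k
      rw [Finset.sum_mul]
      exact Finset.sum_congr rfl fun m _ => by ring
    rw [Finset.sum_congr rfl fun k _ => this k, Finset.sum_comm]
    refine Finset.sum_congr rfl fun m _ => ?_
    rw [← Finset.mul_sum, hw]
  -- step 3 : the boundary weight at the extreme diagonal
  have key2 : M.det * w (N+(p'+1)) = T (N+(p'+1)) N *
      (x • (1 : Matrix (Fin N) (Fin N) ℝ) - Matrix.of (fun i j : Fin N => T i j)).det := by
    have hone : w (N+(p'+1)) = T (N+(p'+1)) N * M⁻¹ (Fin.last N) (Fin.last N) := by
      have hwdef : w (N+(p'+1))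
          = ∑ k : Fin (N+1), T (N+(p'+1)) (k:ℕ) * M⁻¹ k (Fin.last N) := rfl
      rw [hwdef, Finset.sum_eq_single (Fin.last N)]
      · simp
      · intro b _ hb
        have hbN : (b:ℕ) < N := by
          have h1 := b.isLt
          have h2 : (b:ℕ) ≠ N := fun h => hb (Fin.ext (by simp [h]))
          omega
        have : T (N+(p'+1)) (b:ℕ) = 0 := hband _ _ (Or.inl (by omega))
        simp [this]
      · simp
    have hsub : M.submatrix Fin.castSucc Fin.castSucc
        = x • (1 : Matrix (Fin N) (Fin N) ℝ) - Matrix.of (fun i j : Fin N => T i j) := by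
      ext i j
      simp [hM, Matrix.submatrix_apply, Matrix.sub_apply, Matrix.smul_apply, Matrix.one_apply,
        Fin.castSucc_inj]
    have hinv : M⁻¹ (Fin.last N) (Fin.last N)
        = (M.det)⁻¹ * M.adjugate (Fin.last N) (Fin.last N) := by
      rw [Matrix.inv_def, Matrix.smul_apply, Ring.inverse_eq_inv', smul_eq_mul]
    rw [hone, hinv, adjLast, hsub]
    field_simp
  -- step 4 : determinant of the first-row substitution
  have key3 : qdet p' F N N = w (N+(p'+1)) * qdet p' F N (N+(p'+1)) := by
    set Mb : Matrix (Fin (p'+1)) (Fin (p'+1)) ℝ :=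
      Matrix.of (fun i a : Fin (p'+1) =>
        if (i:ℕ) = 0 then F ((a:ℕ)+1) (N+(p'+1)) else F ((a:ℕ)+1) (N+(i:ℕ))) with hMb
    set c : Fin (p'+1) → ℝ :=
      fun i => if (i:ℕ) = 0 then w (N+(p'+1)) else w (N+(i:ℕ)) with hc
    have hrow : (fun a : Fin (p'+1) => F ((a:ℕ)+1) N) = ∑ i : Fin (p'+1), c i • Mb i := by
      funext a
      have hk := key1 ((a:ℕ)+1) (by omega) (by omega)
      have hicc : ∑ m ∈ Finset.Icc (N+1) (N+(p'+1)), F ((a:ℕ)+1) m * w m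
          = ∑ j : Fin (p'+1), F ((a:ℕ)+1) (N+1+(j:ℕ)) * w (N+1+(j:ℕ)) := by
        rw [show Finset.Icc (N+1) (N+(p'+1)) = Finset.Ico (N+1) (N+(p'+1)+1) from
            (Finset.Ico_add_one_right_eq_Icc _ _),
          Finset.sum_Ico_eq_sum_range]
        rw [show N+(p'+1)+1 - (N+1) = p'+1 by omega, ← Fin.sum_univ_eq_sum_range]
      have hrot : ∀ j : Fin (p'+1),
          F ((a:ℕ)+1) (N+1+(j:ℕ)) * w (N+1+(j:ℕ))
            = c (finRotate (p'+1) j) * Mb (finRotate (p'+1) j) a := by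
        intro j
        by_cases hj : j = Fin.last p'
        · subst hj
          have hv0 : ((finRotate (p'+1)) (Fin.last p') : ℕ) = 0 := by
            rw [finRotate_last]
            rfl
          have h1 : c ((finRotate (p'+1)) (Fin.last p')) = w (N+(p'+1)) := by
            simp only [hc, hv0]
            simp
          have h2 : Mb ((finRotate (p'+1)) (Fin.last p')) a = F ((a:ℕ)+1) (N+(p'+1)) := by
            simp only [hMb, Matrix.of_apply, hv0]
            simp
          rw [h1, h2, Fin.val_last, show N+1+p' = N+(p'+1) by omega]
          ring
        · have hv1 : ((finRotate (p'+1)) j : ℕ) = (j:ℕ)+1 := by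
            rw [finRotate_succ_apply, Fin.val_add_one, if_neg hj]
          have h1 : c ((finRotate (p'+1)) j) = w (N+((j:ℕ)+1)) := by
            simp only [hc, hv1]
            simp
          have h2 : Mb ((finRotate (p'+1)) j) a = F ((a:ℕ)+1) (N+((j:ℕ)+1)) := by
            simp only [hMb, Matrix.of_apply, hv1]
            simp
          rw [h1, h2, show N+1+(j:ℕ) = N+((j:ℕ)+1) by omega]
          ring
      rw [Finset.sum_apply]
      rw [hk, hicc, Fintype.sum_equiv (finRotate (p'+1)) _ (fun i => c i * Mb i a) hrot]
      refine Finset.sum_congr rfl fun i _ => ?_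
      simp [smul_eq_mul]
    have hupd : (Matrix.of fun i a : Fin (p'+1) =>
        if (i:ℕ) = 0 then F ((a:ℕ)+1) N else F ((a:ℕ)+1) (N+(i:ℕ)))
        = Mb.updateRow 0 (fun a => F ((a:ℕ)+1) N) := by
      ext i a
      by_cases h : i = (0 : Fin (p'+1))
      · subst h
        simp [Matrix.updateRow_apply]
      · have hne : (i:ℕ) ≠ 0 := fun hh => h (Fin.ext (by simpa using hh))
        simp [Matrix.updateRow_apply, h, hne, hMb]
    rw [qdet, hupd, hrow, Matrix.det_updateRow_sum]
    have : c 0 = w (N+(p'+1)) := by simp [hc]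
    rw [this, smul_eq_mul]
    rfl
  -- assembly
  calc M.det * qdet p' F N N
      = (M.det * w (N+(p'+1))) * qdet p' F N (N+(p'+1)) := by rw [key3]; ring
    _ = T (N+(p'+1)) N *
        (x • (1 : Matrix (Fin N) (Fin N) ℝ) - Matrix.of (fun i j : Fin N => T i j)).det *
        qdet p' F N (N+(p'+1)) := by rw [key2]
    _ = (-1)^p' * T (N+(p'+1)) N *
        (x • (1 : Matrix (Fin N) (Fin N) ℝ) - Matrix.of (fun i j : Fin N => T i j)).det *
        qdet p' F (N+1) (N+1) := by
        rw [qdet_rotate, qdet_self]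
        ring


lemma l2poly (p q : ℕ) (hp : 1 ≤ p) (T : ℕ → ℕ → ℝ)
    (hband : ∀ i j, (j + p < i ∨ i + q < j) → T i j = 0)
    (hext : ∀ n, T (n + p) n ≠ 0)
    (A : ℕ → ℕ → Polynomial ℝ)
    (hA0 : ∀ a, 1 ≤ a → a ≤ p → ∀ n, n < a - 1 → A a n = 0)
    (hA1 : ∀ a, 1 ≤ a → a ≤ p → A a (a - 1) = 1)
    (hArec : ∀ a, 1 ≤ a → a ≤ p → ∀ n,
      ∑ m ∈ Finset.Icc (n - q) (n + p), A a m * Polynomial.C (T m n)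
        = Polynomial.X * A a n)
    (P : ℕ → Polynomial ℝ)
    (hP0 : P 0 = 1)
    (hPsucc : ∀ N, P (N + 1) = (Matrix.of fun i j : Fin (N + 1) => T i j).charpoly)
    (α : ℕ → ℝ)
    (hα : ∀ N, α N = (-1 : ℝ) ^ ((p - 1) * N) * ∏ k ∈ Finset.range N, T (k + p) k) :
    ∀ N, P N = Polynomial.C (α N) *
      (Matrix.of fun i a : Fin p =>
        if (i : ℕ) = 0 then A ((a : ℕ) + 1) N else A ((a : ℕ) + 1) (N + (i : ℕ))).det := by
  obtain ⟨p', rfl⟩ : ∃ p', p = p' + 1 := ⟨p - 1, by omega⟩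
  -- evaluation facts
  have hPeval : ∀ K x, (P K).eval x
      = (x • (1 : Matrix (Fin K) (Fin K) ℝ) - Matrix.of (fun i j : Fin K => T i j)).det := by
    intro K x
    match K with
    | 0 => simp [hP0, Matrix.det_isEmpty]
    | (K+1) => rw [hPsucc K, evalCharpoly]
  have hQeval : ∀ n N x, Polynomial.eval x
        (Matrix.of fun i a : Fin (p'+1) =>
          if (i : ℕ) = 0 then A ((a : ℕ) + 1) n else A ((a : ℕ) + 1) (N + (i : ℕ))).det
      = qdet p' (fun a k => (A a k).eval x) N n := by
    intro n N x
    rw [qdet, ← Polynomial.coe_evalRingHom, RingHom.map_det]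
    congr 1
    ext i a
    simp [Matrix.map_apply, apply_ite (Polynomial.eval x)]
  have hrecx : ∀ x a, 1 ≤ a → a ≤ p'+1 → ∀ n,
      ∑ m ∈ Finset.Icc (n - q) (n + (p'+1)), (A a m).eval x * T m n = x * (A a n).eval x := by
    intro x a ha1 ha2 n
    have := congrArg (Polynomial.eval x) (hArec a ha1 ha2 n)
    simpa [Polynomial.eval_finset_sum] using this
  have hPne : ∀ K, P K ≠ 0 := by
    intro K
    match K with
    | 0 => rw [hP0]; exact one_ne_zero
    | (K+1) => rw [hPsucc K]; exact (Matrix.charpoly_monic _).ne_zero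
  intro N
  induction N with
  | zero =>
    have hα0 : α 0 = 1 := by simp [hα 0]
    have hdet1 : (Matrix.of fun i a : Fin (p'+1) =>
        if (i : ℕ) = 0 then A ((a : ℕ) + 1) 0 else A ((a : ℕ) + 1) (0 + (i : ℕ))).det = 1 := by
      have hcol : (Matrix.of fun i a : Fin (p'+1) =>
          if (i : ℕ) = 0 then A ((a : ℕ) + 1) 0 else A ((a : ℕ) + 1) (0 + (i : ℕ)))
          = Matrix.of fun i a : Fin (p'+1) => A ((a : ℕ) + 1) (i : ℕ) := by
        ext i a
        by_cases h : (i : ℕ) = 0 <;> simp only [Matrix.of_apply, h, if_true, if_false, ↓reduceIte] <;> simp [h]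
      rw [hcol]
      rw [Matrix.det_of_lowerTriangular _ (fun i a hlt => ?_)]
      · rw [Finset.prod_congr rfl fun i _ => ?_, Finset.prod_const_one]
        show A ((i : ℕ) + 1) (i : ℕ) = 1
        have := hA1 ((i : ℕ) + 1) (by omega) (by omega)
        simpa using this
      · show A ((a : ℕ) + 1) (i : ℕ) = 0
        exact hA0 _ (by omega) (by omega) _ (by simpa using hlt)
    rw [hP0, hα0, hdet1]
    simp
  | succ N ih =>
    set QQ : ℕ → Polynomial ℝ := fun M => (Matrix.of fun i a : Fin (p'+1) =>
        if (i : ℕ) = 0 then A ((a : ℕ) + 1) M else A ((a : ℕ) + 1) (M + (i : ℕ))).det with hQQ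
    show P (N+1) = Polynomial.C (α (N+1)) * QQ (N+1)
    have hαs : α (N+1) = (-1 : ℝ)^p' * T (N+(p'+1)) N * α N := by
      rw [hα (N+1), hα N, Finset.prod_range_succ, Nat.add_sub_cancel, Nat.mul_succ, pow_add]
      ring
    have main : ∀ x : ℝ, (P N).eval x ≠ 0 → (P (N+1)).eval x ≠ 0 →
        (P (N+1)).eval x = (Polynomial.C (α (N+1)) * QQ (N+1)).eval x := by
      intro x hN h1
      have hdet : (x • (1 : Matrix (Fin (N+1)) (Fin (N+1)) ℝ)
          - Matrix.of (fun i j : Fin (N+1) => T i j)).det ≠ 0 := by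
        rw [← hPeval]; exact h1
      have hpoint := l2point p' q N T hband x (fun a k => (A a k).eval x)
        (fun a ha1 ha2 n => hrecx x a ha1 ha2 n) hdet
      rw [← hPeval (N+1) x, ← hPeval N x] at hpoint
      have e1 : qdet p' (fun a k => (A a k).eval x) N N = (QQ N).eval x :=
        (hQeval N N x).symm
      have e2 : qdet p' (fun a k => (A a k).eval x) (N+1) (N+1) = (QQ (N+1)).eval x :=
        (hQeval (N+1) (N+1) x).symm
      rw [e1, e2] at hpoint
      have ihx : (P N).eval x = α N * (QQ N).eval x := by
        rw [ih]; simp [hQQ]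
      have hQQx : (QQ N).eval x ≠ 0 := fun h0 => hN (by rw [ihx, h0, mul_zero])
      apply mul_right_cancel₀ hQQx
      rw [hpoint, hαs, ihx]
      simp only [Polynomial.eval_mul, Polynomial.eval_C]
      ring
    apply Polynomial.eq_of_infinite_eval_eq
    have hsub : {x : ℝ | (P N * P (N+1)).eval x ≠ 0}
        ⊆ {x : ℝ | (P (N+1)).eval x = (Polynomial.C (α (N+1)) * QQ (N+1)).eval x} := by
      intro x hx
      simp only [Set.mem_setOf_eq, Polynomial.eval_mul, mul_ne_zero_iff] at hx
      exact main x hx.1 hx.2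
    apply Set.Infinite.mono hsub
    have hne : P N * P (N+1) ≠ 0 := mul_ne_zero (hPne N) (hPne (N+1))
    have hfin : {x : ℝ | (P N * P (N+1)).IsRoot x}.Finite :=
      Polynomial.finite_setOf_isRoot hne
    have hic := hfin.infinite_compl
    have hseq : {x : ℝ | (P N * P (N+1)).eval x ≠ 0}
        = {x : ℝ | (P N * P (N+1)).IsRoot x}ᶜ := by
      ext x
      simp [Polynomial.IsRoot]
    rw [hseq]
    exact hic

lemma charpolyT {n : ℕ} (M : Matrix (Fin n) (Fin n) ℝ) : Mᵀ.charpoly = M.charpoly := by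
  rw [Matrix.charpoly, Matrix.charpoly, ← Matrix.det_transpose (Matrix.charmatrix Mᵀ)]
  congr 1
  ext i j
  by_cases h : i = j <;>
    simp [Matrix.charmatrix_apply, Matrix.transpose_apply, Matrix.diagonal_apply, h, eq_comm]

lemma qdet_rec (p' q : ℕ) (T : ℕ → ℕ → ℝ) (x : ℝ) (F : ℕ → ℕ → ℝ) (N : ℕ)
    (hrec : ∀ a, 1 ≤ a → a ≤ p'+1 → ∀ n,
      ∑ m ∈ Finset.Icc (n - q) (n + (p'+1)), F a m * T m n = x * F a n) :
    ∀ n, ∑ m ∈ Finset.Icc (n - q) (n + (p'+1)), qdet p' F N m * T m n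
      = x * qdet p' F N n := by
  intro n
  have expand : ∀ m, qdet p' F N m * T m n
      = ∑ j : Fin (p'+1), ((-1) ^ (j : ℕ) *
          Matrix.det (Matrix.of fun i a : Fin p' =>
            F (((j.succAbove a) : ℕ) + 1) (N + ((i : ℕ) + 1)))) * (F ((j : ℕ) + 1) m * T m n) := by
    intro m
    rw [qdet_cofactor, Finset.sum_mul]
    exact Finset.sum_congr rfl fun j _ => by ring
  rw [Finset.sum_congr rfl fun m _ => expand m, Finset.sum_comm]
  rw [qdet_cofactor, Finset.mul_sum]
  refine Finset.sum_congr rfl fun j _ => ?_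
  rw [← Finset.mul_sum, hrec ((j:ℕ)+1) (by omega) (by omega) n]
  ring



/-- Confluent Christoffel–Darboux formula for the determinantal polynomials of a
`(p,q)`-banded matrix with nonvanishing extreme diagonals:
`α_N β_N ∑_{n=0}^{N} Q_{n,N}(x) R_{n,N}(x) = P'_{N+1}(x)P_N(x) − P'_N(x)P_{N+1}(x)`. -/
theorem confluent_christoffel_darboux
    (p q : ℕ) (hp : 1 ≤ p) (hq : 1 ≤ q)
    (T : ℕ → ℕ → ℝ)
    (hband : ∀ i j, (j + p < i ∨ i + q < j) → T i j = 0)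
    (hext : ∀ n, T (n + p) n ≠ 0 ∧ T n (n + q) ≠ 0)
    (ν : ℕ → ℕ → ℝ) (A : ℕ → ℕ → Polynomial ℝ)
    (hA0 : ∀ a, 1 ≤ a → a ≤ p → ∀ n, n < a - 1 → A a n = 0)
    (hA1 : ∀ a, 1 ≤ a → a ≤ p → A a (a - 1) = 1)
    (hAconst : ∀ a, 1 ≤ a → a ≤ p → ∀ j, a ≤ j → j ≤ p - 1 → A a j = Polynomial.C (ν a j))
    (hArec : ∀ a, 1 ≤ a → a ≤ p → ∀ n,
      ∑ m ∈ Finset.Icc (n - q) (n + p), A a m * Polynomial.C (T m n)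
        = Polynomial.X * A a n)
    (ξ : ℕ → ℕ → ℝ) (B : ℕ → ℕ → Polynomial ℝ)
    (hB0 : ∀ b, 1 ≤ b → b ≤ q → ∀ n, n < b - 1 → B b n = 0)
    (hB1 : ∀ b, 1 ≤ b → b ≤ q → B b (b - 1) = 1)
    (hBconst : ∀ b, 1 ≤ b → b ≤ q → ∀ j, b ≤ j → j ≤ q - 1 → B b j = Polynomial.C (ξ b j))
    (hBrec : ∀ b, 1 ≤ b → b ≤ q → ∀ n,
      ∑ m ∈ Finset.Icc (n - p) (n + q), Polynomial.C (T n m) * B b m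
        = Polynomial.X * B b n)
    (P : ℕ → Polynomial ℝ)
    (hP0 : P 0 = 1)
    (hPsucc : ∀ N, P (N + 1) = (Matrix.of fun i j : Fin (N + 1) => T i j).charpoly)
    (α : ℕ → ℝ)
    (hα : ∀ N, α N = (-1 : ℝ) ^ ((p - 1) * N) * ∏ k ∈ Finset.range N, T (k + p) k)
    (β : ℕ → ℝ)
    (hβ : ∀ N, β N = (-1 : ℝ) ^ ((q - 1) * N) * ∏ k ∈ Finset.range N, T k (k + q))
    (Q : ℕ → ℕ → Polynomial ℝ)
    (hQ : ∀ n N, Q n N = (Matrix.of fun i a : Fin p =>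
        if (i : ℕ) = 0 then A ((a : ℕ) + 1) n else A ((a : ℕ) + 1) (N + (i : ℕ))).det)
    (R : ℕ → ℕ → Polynomial ℝ)
    (hR : ∀ n N, R n N = (Matrix.of fun i b : Fin q =>
        if (i : ℕ) = 0 then B ((b : ℕ) + 1) n else B ((b : ℕ) + 1) (N + (i : ℕ))).det) :
    ∀ (N : ℕ) (x : ℝ),
      α N * β N * ∑ n ∈ Finset.range (N + 1), (Q n N).eval x * (R n N).eval x
        = (Polynomial.derivative (P (N + 1))).eval x * (P N).eval x
          - (Polynomial.derivative (P N)).eval x * (P (N + 1)).eval x := by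
  obtain ⟨p', rfl⟩ : ∃ p', p = p' + 1 := ⟨p - 1, by omega⟩
  obtain ⟨q', rfl⟩ : ∃ q', q = q' + 1 := ⟨q - 1, by omega⟩
  have hL2A : ∀ M, P M = Polynomial.C (α M) * Q M M := by
    intro M
    rw [hQ M M]
    exact l2poly (p'+1) (q'+1) (by omega) T hband (fun n => (hext n).1) A hA0 hA1 hArec
      P hP0 hPsucc α hα M
  have hL2B : ∀ M, P M = Polynomial.C (β M) * R M M := by
    intro M
    rw [hR M M]
    refine l2poly (q'+1) (p'+1) (by omega) (fun i j => T j i)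
      (fun i j h => hband j i (Or.symm h)) (fun n => (hext n).2) B hB0 hB1
      (fun b hb1 hb2 n => by
        rw [← hBrec b hb1 hb2 n]
        exact Finset.sum_congr rfl fun m _ => mul_comm _ _)
      P hP0 (fun N => by
        rw [hPsucc N,
          show (Matrix.of fun i j : Fin (N+1) => T (j : ℕ) (i : ℕ))
            = (Matrix.of fun i j : Fin (N+1) => T (i : ℕ) (j : ℕ))ᵀ from by ext i j; rfl,
          charpolyT])
      β (fun N => hβ N) M
  have hQeval : ∀ n N (x : ℝ), (Q n N).eval x
      = qdet p' (fun a k => (A a k).eval x) N n := by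
    intro n N x
    rw [hQ n N, qdet, ← Polynomial.coe_evalRingHom, RingHom.map_det]
    congr 1
    ext i a
    simp [Matrix.map_apply, apply_ite (Polynomial.eval x)]
  have hReval : ∀ n N (y : ℝ), (R n N).eval y
      = qdet q' (fun b k => (B b k).eval y) N n := by
    intro n N y
    rw [hR n N, qdet, ← Polynomial.coe_evalRingHom, RingHom.map_det]
    congr 1
    ext i b
    simp [Matrix.map_apply, apply_ite (Polynomial.eval y)]
  have hrecAx : ∀ x : ℝ, ∀ a, 1 ≤ a → a ≤ p'+1 → ∀ n,
      ∑ m ∈ Finset.Icc (n - (q'+1)) (n + (p'+1)), (A a m).eval x * T m n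
        = x * (A a n).eval x := by
    intro x a ha1 ha2 n
    have := congrArg (Polynomial.eval x) (hArec a ha1 ha2 n)
    simpa [Polynomial.eval_finset_sum] using this
  have hrecBy : ∀ y : ℝ, ∀ b, 1 ≤ b → b ≤ q'+1 → ∀ n,
      ∑ m ∈ Finset.Icc (n - (p'+1)) (n + (q'+1)), (B b m).eval y * T n m
        = y * (B b n).eval y := by
    intro y b hb1 hb2 n
    have := congrArg (Polynomial.eval y) (hBrec b hb1 hb2 n)
    simp only [Polynomial.eval_finset_sum, Polynomial.eval_mul, Polynomial.eval_C,
      Polynomial.eval_X] at this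
    rw [← this]
    exact Finset.sum_congr rfl fun m _ => mul_comm _ _
  have hαs : ∀ N, α (N+1) = (-1 : ℝ)^p' * T (N+(p'+1)) N * α N := by
    intro N
    rw [hα (N+1), hα N, Finset.prod_range_succ, Nat.add_sub_cancel, Nat.mul_succ, pow_add]
    ring
  have hβs : ∀ N, β (N+1) = (-1 : ℝ)^q' * T N (N+(q'+1)) * β N := by
    intro N
    rw [hβ (N+1), hβ N, Finset.prod_range_succ, Nat.add_sub_cancel, Nat.mul_succ, pow_add]
    ring
  -- the two–variable Christoffel–Darboux formula
  have cd : ∀ (N : ℕ) (x y : ℝ),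
      α N * β N * ((x - y) * ∑ n ∈ Finset.range (N+1), (Q n N).eval x * (R n N).eval y)
        = (P (N+1)).eval x * (P N).eval y - (P N).eval x * (P (N+1)).eval y := by
    intro N x y
    have htele := tele (p'+1) (q'+1) N T hband x y
      (fun n => (Q n N).eval x) (fun n => (R n N).eval y)
      (fun n => by
        simp only [hQeval _ N x]
        exact qdet_rec p' (q'+1) T x _ N (hrecAx x) n)
      (fun n => by
        simp only [hReval _ N y]
        have h := qdet_rec q' (p'+1) (fun i j => T j i) y
          (fun b k => (B b k).eval y) N (hrecBy y) n
        rw [← h]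
        exact Finset.sum_congr rfl fun m _ => mul_comm _ _)
    have hb1 : ∑ n ∈ Finset.range (N+1),
        (∑ m ∈ Finset.Icc (N+1) (N+(p'+1)), (Q m N).eval x * T m n) * (R n N).eval y
        = ((Q (N+(p'+1)) N).eval x * T (N+(p'+1)) N) * (R N N).eval y := by
      have hin : ∀ n, ∑ m ∈ Finset.Icc (N+1) (N+(p'+1)), (Q m N).eval x * T m n
          = (Q (N+(p'+1)) N).eval x * T (N+(p'+1)) n := by
        intro n
        rw [Finset.sum_eq_single (N+(p'+1))]
        · intro m hm hne
          simp only [Finset.mem_Icc] at hm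
          have h0 : (Q m N).eval x = 0 := by
            rw [hQeval m N x, show m = N + (m - N) from by omega]
            exact qdet_vanish p' _ N (m - N) (by omega) (by omega)
          rw [h0, zero_mul]
        · intro habs
          exact absurd (Finset.mem_Icc.mpr ⟨by omega, by omega⟩) habs
      rw [Finset.sum_congr rfl fun n _ => by rw [hin n]]
      rw [Finset.sum_eq_single N]
      · intro n hn hne
        simp only [Finset.mem_range] at hn
        have : T (N+(p'+1)) n = 0 := hband _ _ (Or.inl (by omega))
        rw [this, mul_zero, zero_mul]
      · intro habs
        exact absurd (Finset.mem_range.mpr (by omega)) habs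
    have hb2 : ∑ n ∈ Finset.range (N+1),
        (Q n N).eval x * (∑ m ∈ Finset.Icc (N+1) (N+(q'+1)), T n m * (R m N).eval y)
        = (Q N N).eval x * (T N (N+(q'+1)) * (R (N+(q'+1)) N).eval y) := by
      have hin : ∀ n, ∑ m ∈ Finset.Icc (N+1) (N+(q'+1)), T n m * (R m N).eval y
          = T n (N+(q'+1)) * (R (N+(q'+1)) N).eval y := by
        intro n
        rw [Finset.sum_eq_single (N+(q'+1))]
        · intro m hm hne
          simp only [Finset.mem_Icc] at hm
          have h0 : (R m N).eval y = 0 := by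
            rw [hReval m N y, show m = N + (m - N) from by omega]
            exact qdet_vanish q' _ N (m - N) (by omega) (by omega)
          rw [h0, mul_zero]
        · intro habs
          exact absurd (Finset.mem_Icc.mpr ⟨by omega, by omega⟩) habs
      rw [Finset.sum_congr rfl fun n _ => by rw [hin n]]
      rw [Finset.sum_eq_single N]
      · intro n hn hne
        simp only [Finset.mem_range] at hn
        have : T n (N+(q'+1)) = 0 := hband _ _ (Or.inr (by omega))
        rw [this, zero_mul, mul_zero]
      · intro habs
        exact absurd (Finset.mem_range.mpr (by omega)) habs
    have hrotQ : (Q (N+(p'+1)) N).eval x = (-1:ℝ)^p' * (Q (N+1) (N+1)).eval x := by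
      rw [hQeval (N+(p'+1)) N x, qdet_rotate, hQeval (N+1) (N+1) x, qdet_self]
    have hrotR : (R (N+(q'+1)) N).eval y = (-1:ℝ)^q' * (R (N+1) (N+1)).eval y := by
      rw [hReval (N+(q'+1)) N y, qdet_rotate, hReval (N+1) (N+1) y, qdet_self]
    have hPAx : ∀ M (z : ℝ), (P M).eval z = α M * (Q M M).eval z := by
      intro M z
      rw [hL2A M]
      simp
    have hPBy : ∀ M (z : ℝ), (P M).eval z = β M * (R M M).eval z := by
      intro M z
      rw [hL2B M]
      simp
    rw [htele, hb1, hb2, hrotQ, hrotR, hPAx (N+1) x, hPAx N x, hPBy N y, hPBy (N+1) y,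
      hαs N, hβs N]
    ring
  -- confluent limit via the derivative
  intro N x
  set S : Polynomial ℝ := ∑ n ∈ Finset.range (N+1), Polynomial.C ((Q n N).eval x) * R n N
    with hS
  have hG : Polynomial.C (α N * β N) * ((Polynomial.C x - Polynomial.X) * S)
      = Polynomial.C ((P (N+1)).eval x) * P N - Polynomial.C ((P N).eval x) * P (N+1) := by
    apply Polynomial.funext
    intro y
    have hcd := cd N x y
    simp only [hS, Polynomial.eval_mul, Polynomial.eval_sub, Polynomial.eval_C,
      Polynomial.eval_X, Polynomial.eval_finset_sum]
    rw [← hcd]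
  have hder := congrArg (fun g => (Polynomial.derivative g).eval x) hG
  simp only [Polynomial.derivative_mul, Polynomial.derivative_sub, Polynomial.derivative_C,
    Polynomial.derivative_X, Polynomial.eval_add, Polynomial.eval_sub, Polynomial.eval_mul,
    Polynomial.eval_C, Polynomial.eval_X, Polynomial.eval_neg, zero_mul, zero_add, zero_sub,
    mul_zero, sub_self, add_zero, sub_zero, neg_mul, one_mul, mul_neg] at hder
  have hSx : S.eval x = ∑ n ∈ Finset.range (N+1), (Q n N).eval x * (R n N).eval x := by
    simp [hS, Polynomial.eval_finset_sum]
  rw [hSx] at hder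
  linear_combination -hder
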